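/- If a graph G on n > 4 vertices is factored into graphs H and K, each without isolated vertices, then |E(G)| ≤ (1/2)·|E(H)|·|E(K)|. -/
import Mathlib

open SimpleGraph Matrix

theorem stmt5 {n : ℕ} (hn : 4 < n) (G H K : SimpleGraph (Fin n))
    [DecidableRel G.Adj] [DecidableRel H.Adj] [DecidableRel K.Adj]
    (hfac : G.adjMatrix ℝ = H.adjMatrix ℝ * K.adjMatrix ℝ)
    (hH : ∀ v, 0 < H.degree v) (hK : ∀ v, 0 < K.degree v) :
    2 * G.edgeFinset.card ≤ H.edgeFinset.card * K.edgeFinset.card := by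
  classical
  set x : Fin n → ℝ := fun v => (H.degree v : ℝ) with hx
  set y : Fin n → ℝ := fun v => (K.degree v : ℝ) with hy
  have hx1 : ∀ v, 1 ≤ x v := fun v => Nat.one_le_cast.mpr (hH v)
  have hy1 : ∀ v, 1 ≤ y v := fun v => Nat.one_le_cast.mpr (hK v)
  -- row/column sums of adjacency matrices
  have hrow : ∀ (L : SimpleGraph (Fin n)) [DecidableRel L.Adj] (v : Fin n),
      ∑ u, L.adjMatrix ℝ v u = (L.degree v : ℝ) := by
    intro L _ v
    simp [adjMatrix_apply, SimpleGraph.degree, SimpleGraph.neighborFinset_eq_filter,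
      Finset.sum_ite, Finset.filter_filter]
  have hcol : ∀ (L : SimpleGraph (Fin n)) [DecidableRel L.Adj] (w : Fin n),
      ∑ v, L.adjMatrix ℝ v w = (L.degree w : ℝ) := by
    intro L _ w
    rw [← hrow L w]
    exact Finset.sum_congr rfl fun v _ => by simp [adjMatrix_apply, SimpleGraph.adj_comm]
  -- Step A : ∑ x*y = 2 * |E(G)|
  have hA : ∑ w, x w * y w = 2 * (G.edgeFinset.card : ℝ) := by
    have h1 : ∑ v, ∑ u, G.adjMatrix ℝ v u = 2 * (G.edgeFinset.card : ℝ) := by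
      have := G.sum_degrees_eq_twice_card_edges
      calc ∑ v, ∑ u, G.adjMatrix ℝ v u = ∑ v, (G.degree v : ℝ) :=
            Finset.sum_congr rfl fun v _ => hrow G v
        _ = ((∑ v, G.degree v : ℕ) : ℝ) := by push_cast; ring
        _ = 2 * (G.edgeFinset.card : ℝ) := by rw [this]; push_cast; ring
    have h2 : ∑ v, ∑ u, G.adjMatrix ℝ v u = ∑ w, x w * y w := by
      calc ∑ v, ∑ u, G.adjMatrix ℝ v u
          = ∑ v, ∑ u, ∑ w, H.adjMatrix ℝ v w * K.adjMatrix ℝ w u := by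
            rw [hfac]; simp only [Matrix.mul_apply]
        _ = ∑ v, ∑ w, ∑ u, H.adjMatrix ℝ v w * K.adjMatrix ℝ w u :=
            Finset.sum_congr rfl fun v _ => Finset.sum_comm
        _ = ∑ v, ∑ w, H.adjMatrix ℝ v w * ∑ u, K.adjMatrix ℝ w u :=
            Finset.sum_congr rfl fun v _ => Finset.sum_congr rfl fun w _ =>
              (Finset.mul_sum _ _ _).symm
        _ = ∑ w, ∑ v, H.adjMatrix ℝ v w * ∑ u, K.adjMatrix ℝ w u := Finset.sum_comm
        _ = ∑ w, (∑ v, H.adjMatrix ℝ v w) * ∑ u, K.adjMatrix ℝ w u :=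
            Finset.sum_congr rfl fun w _ => (Finset.sum_mul _ _ _).symm
        _ = ∑ w, x w * y w := Finset.sum_congr rfl fun w _ => by rw [hcol H w, hrow K w]
    rw [← h2, h1]
  -- Step B : x v + y v ≤ n - 1
  have hB : ∀ v, x v + y v ≤ (n : ℝ) - 1 := by
    intro v
    have hdiag : ∑ w, H.adjMatrix ℝ v w * K.adjMatrix ℝ w v = 0 := by
      have := congrArg (fun M => M v v) hfac
      simpa [Matrix.mul_apply] using this.symm
    have hdisj : Disjoint (H.neighborFinset v) (K.neighborFinset v) := by
      rw [Finset.disjoint_left]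
      intro w hwH hwK
      have hterm : H.adjMatrix ℝ v w * K.adjMatrix ℝ w v = 0 := by
        have hnonneg : ∀ u ∈ Finset.univ,
            0 ≤ H.adjMatrix ℝ v u * K.adjMatrix ℝ u v := fun u _ =>
          mul_nonneg (by simp [adjMatrix_apply]; positivity) (by simp [adjMatrix_apply]; positivity)
        exact (Finset.sum_eq_zero_iff_of_nonneg hnonneg).mp hdiag w (Finset.mem_univ w)
      rw [SimpleGraph.mem_neighborFinset] at hwH hwK
      rw [adjMatrix_apply, adjMatrix_apply, if_pos hwH, if_pos hwK.symm] at hterm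
      norm_num at hterm
    have hsub : H.neighborFinset v ∪ K.neighborFinset v ⊆ Finset.univ.erase v := by
      intro w hw
      rcases Finset.mem_union.mp hw with h | h <;>
        rw [SimpleGraph.mem_neighborFinset] at h
      · exact Finset.mem_erase.mpr ⟨(H.ne_of_adj h).symm, Finset.mem_univ w⟩
      · exact Finset.mem_erase.mpr ⟨(K.ne_of_adj h).symm, Finset.mem_univ w⟩
    have hcard : H.degree v + K.degree v ≤ n - 1 := by
      have := Finset.card_le_card hsub
      rwa [Finset.card_union_of_disjoint hdisj, Finset.card_erase_of_mem (Finset.mem_univ v),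
        Finset.card_univ, Fintype.card_fin] at this
    have : ((H.degree v + K.degree v : ℕ) : ℝ) ≤ ((n - 1 : ℕ) : ℝ) := by exact_mod_cast hcard
    have hn1 : ((n - 1 : ℕ) : ℝ) = (n : ℝ) - 1 := by
      have : 1 ≤ n := by omega
      push_cast [this]; ring
    rw [hn1] at this
    push_cast at this
    exact this
  -- Step C : the analytic inequality  4 * ∑ x*y ≤ (∑ x) * (∑ y)
  set p : Fin n → ℝ := fun v => Real.sqrt (x v * y v) with hp
  have hxy0 : ∀ v, 0 ≤ x v * y v := fun v =>
    mul_nonneg (le_trans zero_le_one (hx1 v)) (le_trans zero_le_one (hy1 v))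
  have hpsq : ∀ v, p v ^ 2 = x v * y v := fun v => Real.sq_sqrt (hxy0 v)
  have hp1 : ∀ v, 1 ≤ p v := fun v =>
    Real.one_le_sqrt.mpr (one_le_mul_of_one_le_of_one_le (hx1 v) (hy1 v))
  have hpM : ∀ v, p v ≤ ((n : ℝ) - 1) / 2 := by
    intro v
    have h1 : x v * y v ≤ (((n : ℝ) - 1) / 2) ^ 2 := by nlinarith [hB v, sq_nonneg (x v - y v), hx1 v, hy1 v]
    have h2 : (0:ℝ) ≤ ((n : ℝ) - 1) / 2 := by
      have : (5:ℝ) ≤ n := by exact_mod_cast hn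
      linarith
    calc p v ≤ Real.sqrt ((((n : ℝ) - 1) / 2) ^ 2) := Real.sqrt_le_sqrt h1
      _ = ((n : ℝ) - 1) / 2 := Real.sqrt_sq h2
  have hQsq : (∑ v, p v) ^ 2 ≤ (∑ v, x v) * (∑ v, y v) := by
    have expand : (∑ v, p v) ^ 2 = ∑ v, ∑ u, p v * p u := by
      rw [sq, Finset.sum_mul_sum]
    have expand2 : (∑ v, x v) * (∑ v, y v) = ∑ v, ∑ u, x v * y u := by
      rw [Finset.sum_mul_sum]
    rw [expand, expand2]
    have key : ∀ v u : Fin n, 2 * (p v * p u) ≤ x v * y u + x u * y v := by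
      intro v u
      have h1 : p v * p u = Real.sqrt ((x v * y u) * (x u * y v)) := by
        rw [hp]
        rw [← Real.sqrt_mul (hxy0 v)]
        ring_nf
      have h2 : Real.sqrt ((x v * y u) * (x u * y v)) ≤ (x v * y u + x u * y v) / 2 := by
        have ha : 0 ≤ x v * y u := mul_nonneg (by linarith [hx1 v]) (by linarith [hy1 u])
        have hb : 0 ≤ x u * y v := mul_nonneg (by linarith [hx1 u]) (by linarith [hy1 v])
        have : (x v * y u) * (x u * y v) ≤ ((x v * y u + x u * y v) / 2) ^ 2 := by
          nlinarith [sq_nonneg (x v * y u - x u * y v)]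
        calc Real.sqrt ((x v * y u) * (x u * y v))
            ≤ Real.sqrt (((x v * y u + x u * y v) / 2) ^ 2) := Real.sqrt_le_sqrt this
          _ = (x v * y u + x u * y v) / 2 := Real.sqrt_sq (by linarith)
      rw [h1]; linarith [h2]
    have : 2 * (∑ v, ∑ u, p v * p u) ≤ 2 * (∑ v, ∑ u, x v * y u) := by
      calc 2 * (∑ v, ∑ u, p v * p u) = ∑ v, ∑ u, 2 * (p v * p u) := by
            rw [Finset.mul_sum]; exact Finset.sum_congr rfl fun v _ => Finset.mul_sum _ _ _
        _ ≤ ∑ v, ∑ u, (x v * y u + x u * y v) :=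
            Finset.sum_le_sum fun v _ => Finset.sum_le_sum fun u _ => key v u
        _ = 2 * (∑ v, ∑ u, x v * y u) := by
            have hsplit : ∑ v, ∑ u, (x v * y u + x u * y v)
                = (∑ v, ∑ u, x v * y u) + ∑ v, ∑ u, x u * y v := by
              simp [Finset.sum_add_distrib]
            rw [hsplit, Finset.sum_comm (f := fun v u => x u * y v)]
            ring
    linarith
  have hsum_p2 : ∑ v, x v * y v ≤ ((n : ℝ) + 1) / 2 * (∑ v, p v) - ((n : ℝ) - 1) / 2 * n := by
    have step : ∀ v, x v * y v ≤ ((n : ℝ) + 1) / 2 * p v - ((n : ℝ) - 1) / 2 := by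
      intro v
      have := hpsq v
      nlinarith [mul_nonneg (sub_nonneg.mpr (hp1 v)) (sub_nonneg.mpr (hpM v))]
    calc ∑ v, x v * y v ≤ ∑ v, (((n : ℝ) + 1) / 2 * p v - ((n : ℝ) - 1) / 2) :=
          Finset.sum_le_sum fun v _ => step v
      _ = ((n : ℝ) + 1) / 2 * (∑ v, p v) - ((n : ℝ) - 1) / 2 * n := by
          rw [Finset.sum_sub_distrib, ← Finset.mul_sum]
          simp [Finset.card_univ]; ring
  have hC : 4 * (∑ v, x v * y v) ≤ (∑ v, x v) * (∑ v, y v) := by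
    have hn5 : (5:ℝ) ≤ n := by exact_mod_cast hn
    nlinarith [sq_nonneg ((∑ v, p v) - ((n:ℝ) + 1)), hQsq, hsum_p2]
  -- Conclusion
  have hxsum : ∑ v, x v = 2 * (H.edgeFinset.card : ℝ) := by
    have := H.sum_degrees_eq_twice_card_edges
    calc ∑ v, x v = ((∑ v, H.degree v : ℕ) : ℝ) := by push_cast; rfl
      _ = 2 * (H.edgeFinset.card : ℝ) := by rw [this]; push_cast; ring
  have hysum : ∑ v, y v = 2 * (K.edgeFinset.card : ℝ) := by
    have := K.sum_degrees_eq_twice_card_edges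
    calc ∑ v, y v = ((∑ v, K.degree v : ℕ) : ℝ) := by push_cast; rfl
      _ = 2 * (K.edgeFinset.card : ℝ) := by rw [this]; push_cast; ring
  rw [hA, hxsum, hysum] at hC
  have : (2 * G.edgeFinset.card : ℝ) ≤ (H.edgeFinset.card * K.edgeFinset.card : ℝ) := by
    nlinarith [hC]
  exact_mod_cast this
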